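/- Let K be a field of characteristic ≠ 2 in which −1 is a square, and let (a,b) be a nontrivial node. Then (a,b) is 2-times backtrackable (i.e., there exist nontrivial nodes (p,r) and (u,v) with (u,v) ↦ (p,r) ↦ (a,b)) if and only if a²·(a² − b²) is a fourth power in K. -/
import Mathlib


namespace AGM

variable {K : Type*} [Field K]

/-- A node `(a,b)` is nontrivial if `a`, `b`, `a+b`, `a-b` are all nonzero. -/
def Nontriv (p : K × K) : Prop :=
  p.1 ≠ 0 ∧ p.2 ≠ 0 ∧ p.1 + p.2 ≠ 0 ∧ p.1 - p.2 ≠ 0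

/-- AGM advancement between nontrivial nodes: `2c = a + b` and `d² = ab`. -/
def Adv (p q : K × K) : Prop :=
  Nontriv p ∧ Nontriv q ∧ 2 * q.1 = p.1 + p.2 ∧ q.2 ^ 2 = p.1 * p.2

/-- `AdvN n p`: there is a chain of `n` successive AGM advancements through
nontrivial nodes starting at `p`. -/
def AdvN : ℕ → K × K → Prop
  | 0, p => Nontriv p
  | n + 1, p => ∃ q, Adv p q ∧ AdvN n q

/-- `BackN n p`: there is a chain of `n` successive AGM advancements through
nontrivial nodes ending at `p`. -/
def BackN : ℕ → K × K → Prop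
  | 0, p => Nontriv p
  | n + 1, p => ∃ q, Adv q p ∧ BackN n q

/-- Indefinitely advanceable nodes. -/
def AdvInf (p : K × K) : Prop := ∀ n, AdvN n p

/-- Indefinitely backtrackable nodes. -/
def BackInf (p : K × K) : Prop := ∀ n, BackN n p

/-- Nontrivial k-values: `k ∉ {0, 1, -1}`. -/
def Tk (k : K) : Prop := k ≠ 0 ∧ k ≠ 1 ∧ k ≠ -1

/-- k-advancement: `(1+k₁)² k₂² = 4 k₁` for nontrivial k-values. -/
def kAdv (k₁ k₂ : K) : Prop := Tk k₁ ∧ Tk k₂ ∧ (1 + k₁) ^ 2 * k₂ ^ 2 = 4 * k₁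

/-- `TAdvN n k`: a chain of `n` k-advancements within `T_K` starting at `k`. -/
def TAdvN : ℕ → K → Prop
  | 0, k => Tk k
  | n + 1, k => ∃ k₂, kAdv k k₂ ∧ TAdvN n k₂

/-- `TBackN n k`: a chain of `n` k-advancements within `T_K` ending at `k`. -/
def TBackN : ℕ → K → Prop
  | 0, k => Tk k
  | n + 1, k => ∃ k₁, kAdv k₁ k ∧ TBackN n k₁

/-- Indefinitely advanceable k-values. -/
def TAdvInf (k : K) : Prop := ∀ n, TAdvN n k

/-- Indefinitely backtrackable k-values. -/
def TBackInf (k : K) : Prop := ∀ n, TBackN n k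

end AGM

theorem stmt12 {K : Type*} [Field K] (hchar : (2 : K) ≠ 0)
    (hsq : IsSquare (-1 : K)) (a b : K) (hnt : AGM.Nontriv (a, b)) :
    AGM.BackN 2 (a, b) ↔ ∃ t : K, a ^ 2 * (a ^ 2 - b ^ 2) = t ^ 4 := by
  obtain ⟨ha, hb, hab, hab'⟩ := hnt
  simp only at ha hb hab hab'
  have hne : a ^ 2 * (a ^ 2 - b ^ 2) ≠ 0 := by
    apply mul_ne_zero (pow_ne_zero 2 ha)
    rw [show a ^ 2 - b ^ 2 = (a + b) * (a - b) by ring]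
    exact mul_ne_zero hab hab'
  constructor
  · rintro ⟨⟨p, r⟩, ⟨⟨hp, hr, hpr, hpr'⟩, _, h2a, hb2⟩,
      ⟨u, v⟩, ⟨⟨hu, hv, huv, huv'⟩, _, h2p, hr2⟩, _⟩
    simp only at h2a hb2 h2p hr2
    refine ⟨(u - p) / 2, ?_⟩
    have hs : (p - a) ^ 2 = a ^ 2 - b ^ 2 := by linear_combination hb2 - p * h2a
    have hw : (u - p) ^ 2 = 4 * a * (p - a) := by
      linear_combination hr2 - u * h2p + (2 * a - p + r) * h2a
    have key : (u - p) ^ 4 = 16 * (a ^ 2 * (a ^ 2 - b ^ 2)) := by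
      linear_combination ((u - p) ^ 2 + 4 * a * (p - a)) * hw + 16 * a ^ 2 * hs
    field_simp
    linear_combination -key
  · rintro ⟨t, ht⟩
    have ht0 : t ≠ 0 := by rintro rfl; exact hne (by simpa using ht)
    obtain ⟨s, hs2, has⟩ : ∃ s : K, s ^ 2 = a ^ 2 - b ^ 2 ∧ a * s = t ^ 2 :=
      ⟨t ^ 2 / a, by field_simp; linear_combination -ht, by field_simp⟩
    have hs0 : s ≠ 0 := by
      rintro rfl
      exact hne (by rw [← hs2]; ring)
    have hpr : (a + s) * (a - s) = b ^ 2 := by linear_combination -hs2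
    have hb2 : b ^ 2 ≠ 0 := pow_ne_zero 2 hb
    have hpne : a + s ≠ 0 := fun h => hb2 (by rw [← hpr, h, zero_mul])
    have hrne : a - s ≠ 0 := fun h => hb2 (by rw [← hpr, h, mul_zero])
    have huv : (a + s + 2 * t) * (a + s - 2 * t) = (a - s) ^ 2 := by
      linear_combination 4 * has
    have hr2 : (a - s) ^ 2 ≠ 0 := pow_ne_zero 2 hrne
    have hune : a + s + 2 * t ≠ 0 := fun h => hr2 (by rw [← huv, h, zero_mul])
    have hvne : a + s - 2 * t ≠ 0 := fun h => hr2 (by rw [← huv, h, mul_zero])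
    have h2 : (2 : K) ≠ 0 := hchar
    have hsum : a + s + 2 * t + (a + s - 2 * t) ≠ 0 := by
      rw [show a + s + 2 * t + (a + s - 2 * t) = 2 * (a + s) by ring]
      exact mul_ne_zero h2 hpne
    have hdiff : a + s + 2 * t - (a + s - 2 * t) ≠ 0 := by
      rw [show a + s + 2 * t - (a + s - 2 * t) = 2 * (2 * t) by ring]
      exact mul_ne_zero h2 (mul_ne_zero h2 ht0)
    have hpsum : a + s + (a - s) ≠ 0 := by
      rw [show a + s + (a - s) = 2 * a by ring]; exact mul_ne_zero h2 ha
    have hpdiff : a + s - (a - s) ≠ 0 := by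
      rw [show a + s - (a - s) = 2 * s by ring]; exact mul_ne_zero h2 hs0
    exact ⟨(a + s, a - s), ⟨⟨hpne, hrne, hpsum, hpdiff⟩, ⟨ha, hb, hab, hab'⟩, by
        show 2 * a = a + s + (a - s); ring, hpr.symm⟩,
      ⟨(a + s + 2 * t, a + s - 2 * t),
        ⟨⟨hune, hvne, hsum, hdiff⟩, ⟨hpne, hrne, hpsum, hpdiff⟩, by
          show 2 * (a + s) = a + s + 2 * t + (a + s - 2 * t); ring, huv.symm⟩,
        ⟨hune, hvne, hsum, hdiff⟩⟩⟩
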